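/- Let α ∈ (0,1) and define γ₀(t, α) = t² / ((α²/(t+1))^{1/t} · (t+1) − 1) − t for integers t ≥ 1 large enough that the denominator is positive. Then as t → ∞, γ₀(t, α) = 2 log(1/α) + log(t+1) + o(1). -/

import Mathlib

open Real Filter

-- elementary bounds on g(y) = 1 + (y-1)e^y for y ≤ 0
lemma g_nonneg (y : ℝ) : 0 ≤ 1 + (y - 1) * Real.exp y := by
  have h1 : (-y) + 1 ≤ Real.exp (-y) := Real.add_one_le_exp _
  have h2 : (1 - y) * Real.exp y ≤ Real.exp (-y) * Real.exp y :=
    mul_le_mul_of_nonneg_right (by linarith) (Real.exp_pos y).le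
  rw [← Real.exp_add] at h2
  simp at h2
  nlinarith
lemma g_le_sq {y : ℝ} (hy : y ≤ 0) : 1 + (y - 1) * Real.exp y ≤ y ^ 2 := by
  have h1 : y + 1 ≤ Real.exp y := Real.add_one_le_exp _
  nlinarith [mul_nonneg (by linarith : (0:ℝ) ≤ 1 - y)
    (by linarith : (0:ℝ) ≤ Real.exp y - y - 1)]

theorem stmt0 (α : ℝ) (hα : α ∈ Set.Ioo (0 : ℝ) 1) :
    Filter.Tendsto
      (fun t : ℕ =>
        ((t : ℝ) ^ 2 / ((α ^ 2 / ((t : ℝ) + 1)) ^ ((1 : ℝ) / (t : ℝ)) * ((t : ℝ) + 1) - 1)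
            - (t : ℝ))
          - (2 * Real.log (1 / α) + Real.log ((t : ℝ) + 1)))
      Filter.atTop (nhds 0) := by
  obtain ⟨hα0, hα1⟩ := hα
  set c : ℕ → ℝ := fun t => Real.log (α ^ 2 / ((t : ℝ) + 1)) with hcdef
  set x : ℕ → ℝ := fun t => c t / t with hxdef
  set D : ℕ → ℝ := fun t => Real.exp (x t) * ((t : ℝ) + 1) - 1 with hDdef
  have hc_eq : ∀ t : ℕ, c t = 2 * Real.log α - Real.log ((t : ℝ) + 1) := by
    intro t
    have h1 : (0:ℝ) < (t:ℝ) + 1 := by positivity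
    show Real.log (α ^ 2 / ((t:ℝ)+1)) = _
    rw [Real.log_div (by positivity) (ne_of_gt h1), Real.log_pow]
    push_cast; ring
  have hcast : Tendsto (fun t : ℕ => (t : ℝ)) atTop atTop := tendsto_natCast_atTop_atTop
  have hshift : Tendsto (fun t : ℕ => (t : ℝ) + 1) atTop atTop :=
    tendsto_atTop_add_const_right _ 1 hcast
  have hlog1 : Tendsto (fun t : ℕ => Real.log ((t : ℝ) + 1) / t) atTop (nhds 0) := by
    have := (Real.tendsto_pow_log_div_mul_add_atTop 1 (-1) 1 one_ne_zero).comp hshift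
    refine this.congr fun t => ?_
    simp [Function.comp]
  have hlog2 : Tendsto (fun t : ℕ => Real.log ((t : ℝ) + 1) ^ 2 / t) atTop (nhds 0) := by
    have := (Real.tendsto_pow_log_div_mul_add_atTop 1 (-1) 2 one_ne_zero).comp hshift
    refine this.congr fun t => ?_
    simp [Function.comp]
  have hinv : Tendsto (fun t : ℕ => 1 / (t : ℝ)) atTop (nhds 0) :=
    tendsto_const_nhds.div_atTop hcast
  -- x → 0
  have hx0 : Tendsto x atTop (nhds 0) := by
    have : Tendsto (fun t : ℕ => 2 * Real.log α * (1 / (t:ℝ)) - Real.log ((t:ℝ)+1) / t)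
        atTop (nhds 0) := by
      have := (hinv.const_mul (2 * Real.log α)).sub hlog1
      simpa using this
    refine this.congr fun t => ?_
    show _ = c t / (t:ℝ)
    rw [hc_eq t]; ring
  -- c² / t → 0
  have hc2 : Tendsto (fun t : ℕ => c t ^ 2 / t) atTop (nhds 0) := by
    have h1 : Tendsto (fun t : ℕ => (2 * Real.log α) ^ 2 * (1 / (t:ℝ))
        - 4 * Real.log α * (Real.log ((t:ℝ)+1) / t) + Real.log ((t:ℝ)+1) ^ 2 / t)
        atTop (nhds 0) := by
      have := ((hinv.const_mul ((2 * Real.log α) ^ 2)).sub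
        (hlog1.const_mul (4 * Real.log α))).add hlog2
      simpa using this
    refine h1.congr fun t => ?_
    rw [hc_eq t]; ring
  -- x t ≤ 0
  have hxle : ∀ t : ℕ, x t ≤ 0 := by
    intro t
    have hc_neg : c t ≤ 0 := by
      rw [hc_eq t]
      have h1 : Real.log α < 0 := Real.log_neg hα0 hα1
      have h2 : 0 ≤ Real.log ((t:ℝ)+1) := Real.log_nonneg (by push_cast; linarith [Nat.cast_nonneg (α := ℝ) t])
      linarith
    exact div_nonpos_of_nonpos_of_nonneg hc_neg (Nat.cast_nonneg t)
  -- term1 : t * g(x t) → 0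
  have hterm1 : Tendsto (fun t : ℕ => (t:ℝ) * (1 + (x t - 1) * Real.exp (x t)))
      atTop (nhds 0) := by
    refine tendsto_of_tendsto_of_tendsto_of_le_of_le' tendsto_const_nhds hc2 ?_ ?_
    · filter_upwards with t
      exact mul_nonneg (Nat.cast_nonneg t) (g_nonneg (x t))
    · filter_upwards [eventually_ge_atTop 1] with t ht
      have htpos : (0:ℝ) < t := by exact_mod_cast ht
      have := g_le_sq (hxle t)
      have hx2 : (t:ℝ) * (x t) ^ 2 = c t ^ 2 / t := by
        rw [hxdef]; field_simp
      calc (t:ℝ) * (1 + (x t - 1) * Real.exp (x t)) ≤ (t:ℝ) * (x t) ^ 2 :=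
            mul_le_mul_of_nonneg_left this htpos.le
        _ = c t ^ 2 / t := hx2
  -- term2 : (x-1)(e^x - 1) → 0
  have hterm2 : Tendsto (fun t : ℕ => (x t - 1) * (Real.exp (x t) - 1)) atTop (nhds 0) := by
    have hcont : Continuous (fun y : ℝ => (y - 1) * (Real.exp y - 1)) := by continuity
    have := (hcont.tendsto 0).comp hx0
    simpa [Function.comp_def] using this
  -- exp(x t) → 1
  have hexp : Tendsto (fun t : ℕ => Real.exp (x t)) atTop (nhds 1) := by
    have := (Real.continuous_exp.tendsto 0).comp hx0
    simpa [Function.comp_def] using this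
  -- D / t → 1
  have hD : Tendsto (fun t : ℕ => D t / t) atTop (nhds 1) := by
    have h1 : Tendsto (fun t : ℕ => Real.exp (x t) * (1 + 1/(t:ℝ)) - 1/(t:ℝ))
        atTop (nhds 1) := by
      have h2 : Tendsto (fun t : ℕ => (1:ℝ) + 1/(t:ℝ)) atTop (nhds (1 + 0)) :=
        tendsto_const_nhds.add hinv
      have := (hexp.mul h2).sub hinv
      simpa using this
    refine h1.congr' ?_
    filter_upwards [eventually_ge_atTop 1] with t ht
    have htne : (t:ℝ) ≠ 0 := by positivity
    show _ = (Real.exp (x t) * ((t:ℝ)+1) - 1) / t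
    field_simp
  have hDne : ∀ᶠ t : ℕ in atTop, D t ≠ 0 := by
    filter_upwards [hD.eventually_ne one_ne_zero] with t h
    intro h0; apply h; rw [h0]; simp
  -- final limit of the rewritten expression
  have hfin : Tendsto (fun t : ℕ =>
      ((t:ℝ) * (1 + (x t - 1) * Real.exp (x t)) + (x t - 1) * (Real.exp (x t) - 1))
        / (D t / t)) atTop (nhds 0) := by
    have := (hterm1.add hterm2).div hD one_ne_zero
    simpa [Pi.div_def] using this
  refine hfin.congr' ?_
  filter_upwards [eventually_ge_atTop 1, hDne] with t ht hDt
  have htpos : (0:ℝ) < t := by exact_mod_cast ht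
  have htne : (t:ℝ) ≠ 0 := ne_of_gt htpos
  have hbase : (0:ℝ) < α ^ 2 / ((t:ℝ) + 1) := by positivity
  have hrpow : (α ^ 2 / ((t : ℝ) + 1)) ^ ((1 : ℝ) / (t : ℝ)) = Real.exp (x t) := by
    rw [Real.rpow_def_of_pos hbase, hxdef, hcdef, mul_one_div]
  have hlogα : 2 * Real.log (1 / α) + Real.log ((t:ℝ)+1) = -(c t) := by
    rw [hc_eq t, one_div, Real.log_inv]; ring
  have hct : c t = (t:ℝ) * x t := by rw [hxdef]; field_simp
  rw [hrpow, hlogα, hct]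
  have hD' : Real.exp (x t) * ((t:ℝ) + 1) - 1 = D t := by rw [hDdef]
  rw [hD']
  field_simp
  ring
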